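/- Let d = 1, with V ≥ 0 locally bounded satisfying V(x) → ∞ as |x| → ∞. The relaxed Thomas–Fermi minimization problem E^TF_J = inf{ ∫J(ρ) + ∫Vρ − α∫ρ : ρ ≥ 0, ∫ρ = 1 } admits at least one minimizer ρ ∈ L³(ℝ). Every minimizer ρ satisfies the Euler–Lagrange conditions: there is a constant λ such that e_α′(ρ)·1_{ρ ≥ ρ_α} + V − α = λ almost everywhere on supp(ρ), and V − α ≥ λ almost everywhere on the complement of supp(ρ). -/

import Mathlib

/-! Statement 17: Existence of minimizers for the relaxed 1D Thomas–Fermi problem,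
and the Euler–Lagrange conditions they satisfy. -/

open MeasureTheory Filter
open scoped Real ENNReal

noncomputable section

/-- `α = I_w²/(4 c_TF)` with `c_TF = π²`. -/
def alphaC (Iw : ℝ) : ℝ := Iw ^ 2 / (4 * Real.pi ^ 2)

/-- `ρ_α = I_w/(2 c_TF)`. -/
def rhoAlphaC (Iw : ℝ) : ℝ := Iw / (2 * Real.pi ^ 2)

/-- The relaxed local energy `J(x) = 1_{x ≥ ρ_α}(c_TF x³ − I_w x² + αx)`. -/
def Jfun (Iw : ℝ) (x : ℝ) : ℝ :=
  if rhoAlphaC Iw ≤ x then Real.pi ^ 2 * x ^ 3 - Iw * x ^ 2 + alphaC Iw * x else 0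

/-- Derivative `e_α′(x) = 3 c_TF x² − 2 I_w x + α` of the local energy. -/
def eAlphaDeriv (Iw : ℝ) (x : ℝ) : ℝ :=
  3 * Real.pi ^ 2 * x ^ 2 - 2 * Iw * x + alphaC Iw

/-- The relaxed Thomas–Fermi functional `E^TF_J[ρ] = ∫J(ρ) + ∫Vρ − α∫ρ`. -/
def EJfun (Iw : ℝ) (V ρ : ℝ → ℝ) : ℝ :=
  (∫ x, Jfun Iw (ρ x)) + (∫ x, V x * ρ x) - alphaC Iw * ∫ x, ρ x

/-- Admissible densities for the relaxed problem. -/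
def TFJadm (Iw : ℝ) (V : ℝ → ℝ) (ρ : ℝ → ℝ) : Prop :=
  Measurable ρ ∧ (∀ x, 0 ≤ ρ x) ∧ Integrable ρ ∧ (∫ x, ρ x = 1) ∧
    Integrable (fun x => Jfun Iw (ρ x)) ∧ Integrable (fun x => V x * ρ x)

/-- The relaxed Thomas–Fermi energy `E^TF_J`. -/
def ETFJ (Iw : ℝ) (V : ℝ → ℝ) : ℝ :=
  sInf {e | ∃ ρ, TFJadm Iw V ρ ∧ e = EJfun Iw V ρ}

namespace TFaux
open scoped Topology

lemma pi_sq_pos : (0:ℝ) < Real.pi ^ 2 := pow_pos Real.pi_pos 2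

lemma rho_pos {Iw : ℝ} (hIw : 0 < Iw) : 0 < rhoAlphaC Iw :=
  div_pos hIw (by positivity)

lemma alpha_pos {Iw : ℝ} (hIw : 0 < Iw) : 0 < alphaC Iw := by
  unfold alphaC; positivity

/-- the local energy -/
def eA (Iw x : ℝ) : ℝ := Real.pi ^ 2 * x ^ 3 - Iw * x ^ 2 + alphaC Iw * x

lemma eA_factor (Iw x : ℝ) :
    eA Iw x = x * (Real.pi ^ 2 * (x - rhoAlphaC Iw) ^ 2) := by
  unfold eA alphaC rhoAlphaC
  have h := pi_sq_pos
  field_simp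
  ring

lemma eA_nonneg {Iw x : ℝ} (hx : 0 ≤ x) : 0 ≤ eA Iw x := by
  rw [eA_factor]; positivity

lemma eA_rho (Iw : ℝ) : eA Iw (rhoAlphaC Iw) = 0 := by
  rw [eA_factor]; ring

lemma Jfun_eq_ite (Iw x : ℝ) : Jfun Iw x = if rhoAlphaC Iw ≤ x then eA Iw x else 0 := rfl

lemma Jfun_nonneg {Iw : ℝ} (hIw : 0 < Iw) (x : ℝ) : 0 ≤ Jfun Iw x := by
  rw [Jfun_eq_ite]
  split_ifs with h
  · exact eA_nonneg (le_trans (rho_pos hIw).le h)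
  · exact le_refl 0

lemma Jfun_eq_zero {Iw : ℝ} {x : ℝ} (hx : x ≤ rhoAlphaC Iw) : Jfun Iw x = 0 := by
  rw [Jfun_eq_ite]
  split_ifs with h
  · have : x = rhoAlphaC Iw := le_antisymm hx h
    rw [this, eA_rho]
  · rfl

/-- Tangent line identity: `e(s) - e(t) - e'(t)(s-t) = (s-t)^2 (c(s+2t) - Iw)`. -/
lemma tangent_identity (Iw s t : ℝ) :
    eA Iw s - eA Iw t - eAlphaDeriv Iw t * (s - t)
      = (s - t) ^ 2 * (Real.pi ^ 2 * (s + 2 * t) - Iw) := by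
  unfold eA eAlphaDeriv; ring

/-- `e'(ρ_α) = 0`. -/
lemma deriv_rho (Iw : ℝ) : eAlphaDeriv Iw (rhoAlphaC Iw) = 0 := by
  unfold eAlphaDeriv rhoAlphaC alphaC
  have h := pi_sq_pos
  field_simp
  ring

/-- Explicit inverse of `e'` on `[ρ_α, ∞)`. -/
def phiP (Iw u : ℝ) : ℝ :=
  (Iw + Real.sqrt (Iw ^ 2 / 4 + 3 * Real.pi ^ 2 * u)) / (3 * Real.pi ^ 2)

lemma phiP_ge {Iw : ℝ} (hIw : 0 < Iw) {u : ℝ} (hu : 0 ≤ u) :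
    rhoAlphaC Iw ≤ phiP Iw u := by
  unfold phiP rhoAlphaC
  rw [div_le_div_iff₀ (by positivity) (by positivity)]
  have h1 : Iw / 2 ≤ Real.sqrt (Iw ^ 2 / 4 + 3 * Real.pi ^ 2 * u) := by
    rw [show Iw / 2 = Real.sqrt ((Iw/2)^2) by rw [Real.sqrt_sq (by linarith)]]
    apply Real.sqrt_le_sqrt
    nlinarith [pi_sq_pos]
  nlinarith [pi_sq_pos]

lemma phiP_deriv {Iw : ℝ} (hIw : 0 < Iw) {u : ℝ} (hu : 0 ≤ u) :
    eAlphaDeriv Iw (phiP Iw u) = u := by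
  unfold eAlphaDeriv phiP alphaC
  set S := Real.sqrt (Iw ^ 2 / 4 + 3 * Real.pi ^ 2 * u) with hSdef
  have hs : S ^ 2 = Iw ^ 2 / 4 + 3 * Real.pi ^ 2 * u := Real.sq_sqrt (by positivity)
  have h := pi_sq_pos
  field_simp
  linear_combination 4 * hs

lemma phiP_mono (Iw : ℝ) : Monotone (phiP Iw) := by
  intro a b hab
  unfold phiP
  have h := pi_sq_pos
  apply div_le_div_of_nonneg_right ?_ (by positivity)
  gcongr

lemma phiP_continuous (Iw : ℝ) : Continuous (phiP Iw) := by
  unfold phiP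
  fun_prop

lemma phiP_zero {Iw : ℝ} (hIw : 0 < Iw) : phiP Iw 0 = rhoAlphaC Iw := by
  unfold phiP rhoAlphaC
  rw [mul_zero, add_zero, show Iw ^ 2 / 4 = (Iw/2)^2 by ring, Real.sqrt_sq (by linarith)]
  field_simp
  ring

lemma phiP_nonneg {Iw : ℝ} (hIw : 0 < Iw) (u : ℝ) : 0 ≤ phiP Iw u := by
  unfold phiP
  positivity


/-- Key pointwise minimality at `t = φ⁺(u)` for `u ≥ 0`. -/
lemma min_phiP {Iw : ℝ} (hIw : 0 < Iw) {u : ℝ} (hu : 0 ≤ u) {s : ℝ} (hs : 0 ≤ s) :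
    Jfun Iw (phiP Iw u) - u * phiP Iw u ≤ Jfun Iw s - u * s := by
  set t := phiP Iw u with htdef
  have htρ : rhoAlphaC Iw ≤ t := phiP_ge hIw hu
  have htd : eAlphaDeriv Iw t = u := phiP_deriv hIw hu
  have hρ := rho_pos hIw
  have hπ := pi_sq_pos
  have h2 : Iw ≤ t * (2 * Real.pi ^ 2) := by
    rw [← div_le_iff₀ (by positivity)]; exact htρ
  have hJt : Jfun Iw t = eA Iw t := by rw [Jfun_eq_ite, if_pos htρ]
  rw [hJt]
  rcases le_or_gt (rhoAlphaC Iw) s with h | h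
  · rw [Jfun_eq_ite, if_pos h]
    have hid := tangent_identity Iw s t
    rw [htd] at hid
    nlinarith [sq_nonneg (s - t), mul_nonneg (sq_nonneg (s-t)) hs]
  · rw [Jfun_eq_zero h.le]
    have hid := tangent_identity Iw (rhoAlphaC Iw) t
    rw [htd, eA_rho] at hid
    have hρs : 0 ≤ u * (rhoAlphaC Iw - s) := mul_nonneg hu (sub_nonneg.mpr h.le)
    nlinarith [sq_nonneg (rhoAlphaC Iw - t), mul_nonneg (sq_nonneg (rhoAlphaC Iw - t)) hρ.le]

/-- Pointwise minimality in the flat cases. -/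
lemma min_flat {Iw : ℝ} (hIw : 0 < Iw) {u t : ℝ}
    (h : (u ≤ 0 ∧ t = 0) ∨ (u = 0 ∧ 0 ≤ t ∧ t ≤ rhoAlphaC Iw)) {s : ℝ} (hs : 0 ≤ s) :
    Jfun Iw t - u * t ≤ Jfun Iw s - u * s := by
  have hJs := Jfun_nonneg hIw s
  rcases h with ⟨hu, ht⟩ | ⟨hu, ht0, htρ⟩
  · subst ht
    rw [Jfun_eq_zero (rho_pos hIw).le]
    nlinarith [mul_nonpos_of_nonpos_of_nonneg hu hs]
  · subst hu
    rw [Jfun_eq_zero htρ]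
    simp only [zero_mul, sub_zero]
    linarith

lemma small_le {D K δ : ℝ} (hδ : 0 < δ) (h : ∀ ε, 0 < ε → ε ≤ δ → D ≤ K * ε) : D ≤ 0 := by
  by_contra hD
  push_neg at hD
  have hK0 : (0:ℝ) ≤ max K 0 := le_max_right _ _
  set K' := max K 0 + 1 with hK'
  have hK'pos : 0 < K' := by linarith
  set ε := min δ (D / (2 * K')) with hε
  have hε1 : 0 < ε := lt_min hδ (by positivity)
  have hε2 : ε ≤ δ := min_le_left _ _
  have h3 := h ε hε1 hε2
  have h4 : K * ε ≤ K' * ε := by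
    apply mul_le_mul_of_nonneg_right _ hε1.le
    have := le_max_left K 0
    linarith
  have h5 : K' * ε ≤ K' * (D / (2 * K')) :=
    mul_le_mul_of_nonneg_left (min_le_right _ _) hK'pos.le
  have h6 : K' * (D / (2 * K')) = D / 2 := by field_simp
  nlinarith [h3, h4, h5, h6, hD]

/-- Euler–Lagrange conditions from pointwise minimality. -/
lemma EL_of_min {Iw : ℝ} (hIw : 0 < Iw) {u t : ℝ} (ht : 0 ≤ t)
    (hmin : ∀ s, 0 ≤ s → Jfun Iw t - u * t ≤ Jfun Iw s - u * s) :
    (t ≠ 0 → eAlphaDeriv Iw t * (if rhoAlphaC Iw ≤ t then 1 else 0) - u = 0) ∧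
      (t = 0 → u ≤ 0) := by
  have hρ := rho_pos hIw
  have hπ := pi_sq_pos
  constructor
  · intro htne
    have htpos : 0 < t := lt_of_le_of_ne ht (Ne.symm htne)
    rcases lt_or_ge t (rhoAlphaC Iw) with hlt | hge
    · rw [if_neg (not_le.mpr hlt), mul_zero, zero_sub, neg_eq_zero]
      have hJt : Jfun Iw t = 0 := Jfun_eq_zero hlt.le
      have h1 := hmin (t / 2) (by linarith)
      rw [hJt, Jfun_eq_zero (by linarith : t / 2 ≤ rhoAlphaC Iw)] at h1
      have h2 := hmin ((t + rhoAlphaC Iw) / 2) (by linarith)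
      rw [hJt, Jfun_eq_zero (by linarith : (t + rhoAlphaC Iw) / 2 ≤ rhoAlphaC Iw)] at h2
      nlinarith
    · rw [if_pos hge, mul_one]
      have hJt : Jfun Iw t = eA Iw t := by rw [Jfun_eq_ite, if_pos hge]
      set D := eAlphaDeriv Iw t - u with hD
      -- right-hand perturbation: -D ≤ 0
      have hDge : -D ≤ 0 := by
        apply small_le (K := 3 * Real.pi ^ 2 * t + Real.pi ^ 2) (zero_lt_one)
        intro ε hε hε1
        have hs : rhoAlphaC Iw ≤ t + ε := by linarith
        have h1 := hmin (t + ε) (by linarith)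
        rw [hJt, Jfun_eq_ite, if_pos hs] at h1
        have hid := tangent_identity Iw (t + ε) t
        -- 0 ≤ ε * D + ε^2 * (π² (3t + ε) - Iw)
        nlinarith [mul_pos hπ htpos, sq_nonneg ε, mul_nonneg (sq_nonneg ε) hπ.le,
          mul_nonneg (mul_nonneg (sq_nonneg ε) hπ.le) htpos.le, mul_pos hε hε, hIw]
      -- left-hand perturbation: D ≤ 0
      have hDle : D ≤ 0 := by
        rcases eq_or_lt_of_le hge with heq | hgt
        · -- t = ρ_α : use s < ρ_α to get u ≥ 0, and e'(t)=0
          have h1 := hmin (rhoAlphaC Iw / 2) (by linarith)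
          rw [hJt, Jfun_eq_zero (by linarith : rhoAlphaC Iw / 2 ≤ rhoAlphaC Iw),
            ← heq, eA_rho] at h1
          have hu0 : 0 ≤ u := by nlinarith
          have : eAlphaDeriv Iw t = 0 := by rw [← heq, deriv_rho]
          rw [hD, this]; linarith
        · apply small_le (K := 3 * Real.pi ^ 2 * t) (sub_pos.mpr hgt)
          intro ε hε hε1
          have hs : rhoAlphaC Iw ≤ t - ε := by linarith
          have h1 := hmin (t - ε) (by linarith)
          rw [hJt, Jfun_eq_ite, if_pos hs] at h1
          have hid := tangent_identity Iw (t - ε) t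
          -- 0 ≤ -ε D + ε^2 (π²(3t - ε) - Iw)  ⇒ D ≤ ε (3π² t)
          nlinarith [mul_pos hπ htpos, sq_nonneg ε, mul_nonneg (sq_nonneg ε) hπ.le,
            mul_nonneg (mul_nonneg (sq_nonneg ε) hπ.le) htpos.le, mul_pos hε hε, hIw]
      linarith
  · intro ht0
    subst ht0
    have h1 := hmin (rhoAlphaC Iw) hρ.le
    rw [Jfun_eq_zero (le_refl _), Jfun_eq_zero (rho_pos hIw).le] at h1
    simp only [mul_zero, sub_zero] at h1
    nlinarith


/-- Integrability from a bound on a compact interval and vanishing outside. -/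
lemma integrable_of_bound_support {f : ℝ → ℝ} (hf : AEStronglyMeasurable f volume)
    {C R : ℝ} (hb : ∀ x, |x| ≤ R → |f x| ≤ C) (h0 : ∀ x, R < |x| → f x = 0) :
    Integrable f := by
  have hind : Integrable ((Set.Icc (-R) R).indicator (fun _ => C)) := by
    rw [integrable_indicator_iff measurableSet_Icc]
    exact integrableOn_const measure_Icc_lt_top.ne
  apply Integrable.mono' hind hf
  filter_upwards with x
  rcases le_or_gt (|x|) R with h | h
  · have hx : x ∈ Set.Icc (-R) R := by
      constructor <;> [linarith [neg_abs_le x]; linarith [le_abs_self x]]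
    rw [Set.indicator_of_mem hx]
    exact hb x h
  · have hx : x ∉ Set.Icc (-R) R := by
      intro hx
      rcases abs_le.mpr ⟨hx.1, hx.2⟩ with h'
      · linarith
    rw [Set.indicator_of_notMem hx, h0 x h, norm_zero]

lemma Jfun_measurable (Iw : ℝ) : Measurable (Jfun Iw) := by
  unfold Jfun
  apply Measurable.ite (measurableSet_le measurable_const measurable_id)
  · fun_prop
  · exact measurable_const

lemma Jfun_bound {Iw : ℝ} (hIw : 0 < Iw) {C s : ℝ} (hs : 0 ≤ s) (hsC : s ≤ C) :
    |Jfun Iw s| ≤ Real.pi ^ 2 * C ^ 3 + alphaC Iw * C := by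
  have h1 := Jfun_nonneg hIw s
  rw [abs_of_nonneg h1, Jfun_eq_ite]
  have hπ := pi_sq_pos
  have hα := (alpha_pos hIw).le
  split_ifs with h
  · unfold eA
    nlinarith [sq_nonneg s, pow_le_pow_left₀ hs hsC 3, mul_le_mul_of_nonneg_left hsC hα]
  · have hC : 0 ≤ C := hs.trans hsC
    have : 0 ≤ C ^ 3 := by positivity
    nlinarith [mul_nonneg hα hC]


lemma exists_good (Iw : ℝ) (hIw : 0 < Iw)
    (V : ℝ → ℝ) (hVmeas : Measurable V) (hV0 : ∀ x, 0 ≤ V x)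
    (hVloc : ∀ R : ℝ, ∃ M, ∀ x : ℝ, |x| ≤ R → V x ≤ M)
    (hVinf : Tendsto V (Filter.cocompact ℝ) atTop) :
    ∃ lam ρ₀, TFJadm Iw V ρ₀ ∧ MemLp ρ₀ (ENNReal.ofReal 3) ∧
      ∀ x s : ℝ, 0 ≤ s →
        Jfun Iw (ρ₀ x) - (lam + alphaC Iw - V x) * ρ₀ x
          ≤ Jfun Iw s - (lam + alphaC Iw - V x) * s := by
  have hπ := pi_sq_pos
  have hρ := rho_pos hIw
  have hα := alpha_pos hIw
  -- cocompact lower bound for V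
  have hcomp : ∀ C : ℝ, ∃ R : ℝ, 0 < R ∧ ∀ x : ℝ, R < |x| → C ≤ V x := by
    intro C
    have h := hVinf.eventually (eventually_ge_atTop C)
    rw [Filter.eventually_iff, Filter.mem_cocompact] at h
    obtain ⟨K, hK, hKsub⟩ := h
    obtain ⟨r, hr⟩ := hK.isBounded.subset_closedBall 0
    refine ⟨max r 1, by positivity, fun x hx => ?_⟩
    apply hKsub
    intro hxK
    have := hr hxK
    rw [Metric.mem_closedBall, Real.dist_eq, sub_zero] at this
    have h1 : r ≤ max r 1 := le_max_left _ _
    linarith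
  set α := alphaC Iw with hαdef
  -- the family G and its mass M
  set G : ℝ → ℝ → ℝ := fun lam x => if V x ≤ lam + α then phiP Iw (lam + α - V x) else 0
    with hGdef
  have hGmeas : ∀ lam, Measurable (G lam) := by
    intro lam
    apply Measurable.ite (measurableSet_le hVmeas measurable_const)
    · exact (phiP_continuous Iw).measurable.comp (measurable_const.sub hVmeas)
    · exact measurable_const
  have hGnonneg : ∀ lam x, 0 ≤ G lam x := by
    intro lam x
    simp only [hGdef]
    split_ifs
    · exact phiP_nonneg hIw _
    · exact le_refl 0
  have hGbound : ∀ lam x, G lam x ≤ phiP Iw (lam + α) := by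
    intro lam x
    simp only [hGdef]
    split_ifs with h
    · exact phiP_mono Iw (by linarith [hV0 x])
    · exact phiP_nonneg hIw _
  have hGmono : ∀ lam lam' : ℝ, lam ≤ lam' → ∀ x, G lam x ≤ G lam' x := by
    intro lam lam' hll x
    simp only [hGdef]
    split_ifs with h1 h2
    · exact phiP_mono Iw (by linarith)
    · exact absurd (by linarith : V x ≤ lam' + α) h2
    · exact phiP_nonneg hIw _
    · exact le_refl 0
  have hGint : ∀ lam, Integrable (G lam) := by
    intro lam
    obtain ⟨R, hRpos, hR⟩ := hcomp (lam + α + 1)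
    apply integrable_of_bound_support (hGmeas lam).aestronglyMeasurable
      (C := phiP Iw (lam + α)) (R := R)
    · intro x _
      rw [abs_of_nonneg (hGnonneg lam x)]
      exact hGbound lam x
    · intro x hx
      simp only [hGdef]
      rw [if_neg]
      have := hR x hx
      linarith
  set M : ℝ → ℝ := fun lam => ∫ x, G lam x with hMdef
  have hMmono : ∀ lam lam' : ℝ, lam ≤ lam' → M lam ≤ M lam' := fun lam lam' hll =>
    integral_mono (hGint lam) (hGint lam') (hGmono lam lam' hll)
  -- M is eventually at least 1
  have hSne : ∃ lam, 1 ≤ M lam := by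
    obtain ⟨M₀, hM₀⟩ := hVloc (1 / rhoAlphaC Iw)
    refine ⟨max M₀ 0, ?_⟩
    have hind : Integrable ((Set.Icc (-(1/rhoAlphaC Iw)) (1/rhoAlphaC Iw)).indicator
        (fun _ => rhoAlphaC Iw)) := by
      rw [integrable_indicator_iff measurableSet_Icc]
      exact integrableOn_const measure_Icc_lt_top.ne
    have hle : ∀ x, ((Set.Icc (-(1/rhoAlphaC Iw)) (1/rhoAlphaC Iw)).indicator
        (fun _ => rhoAlphaC Iw)) x ≤ G (max M₀ 0) x := by
      intro x
      rcases Set.indicator_le_self' (f := fun _ => rhoAlphaC Iw)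
        (s := Set.Icc (-(1/rhoAlphaC Iw)) (1/rhoAlphaC Iw)) (fun y hy => hρ.le) x with h
      by_cases hx : x ∈ Set.Icc (-(1/rhoAlphaC Iw)) (1/rhoAlphaC Iw)
      · rw [Set.indicator_of_mem hx]
        have hVx : V x ≤ max M₀ 0 := by
          apply le_trans (hM₀ x (abs_le.mpr ⟨hx.1, hx.2⟩)) (le_max_left _ _)
        simp only [hGdef]
        rw [if_pos (by linarith)]
        calc rhoAlphaC Iw = phiP Iw 0 := (phiP_zero hIw).symm
        _ ≤ _ := phiP_mono Iw (by linarith)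
      · rw [Set.indicator_of_notMem hx]
        exact hGnonneg _ x
    have h1 : ∫ x, ((Set.Icc (-(1/rhoAlphaC Iw)) (1/rhoAlphaC Iw)).indicator
        (fun _ => rhoAlphaC Iw)) x ≤ M (max M₀ 0) :=
      integral_mono hind (hGint _) hle
    rw [integral_indicator_const _ measurableSet_Icc] at h1
    rw [measureReal_def, Real.volume_Icc] at h1
    have h2 : (1/rhoAlphaC Iw) - (-(1/rhoAlphaC Iw)) = 2 / rhoAlphaC Iw := by ring
    rw [h2, ENNReal.toReal_ofReal (by positivity), smul_eq_mul] at h1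
    have h3 : 2 / rhoAlphaC Iw * rhoAlphaC Iw = 2 := by field_simp
    rw [h3] at h1
    linarith
  have hSlow : ∀ lam, lam < -α → M lam = 0 := by
    intro lam hlam
    have : ∀ x, G lam x = 0 := by
      intro x
      simp only [hGdef]
      rw [if_neg]
      have := hV0 x
      intro h
      linarith
    simp only [hMdef]
    rw [show G lam = (fun _ => (0:ℝ)) from funext this, integral_zero]
  set S := {lam | 1 ≤ M lam} with hSdef
  have hbddS : BddBelow S := by
    refine ⟨-α, fun lam hl => ?_⟩
    by_contra h
    push_neg at h
    have := hSlow lam h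
    have h1 : (1:ℝ) ≤ M lam := hl
    rw [this] at h1
    linarith
  have hSnonempty : S.Nonempty := hSne
  set lamS := sInf S with hlamSdef
  have hseq0 : Tendsto (fun n : ℕ => 1 / ((n:ℝ) + 1)) atTop (𝓝 0) :=
    tendsto_one_div_add_atTop_nhds_zero_nat
  -- upper semicontinuity step : 1 ≤ M lamS
  have hup : 1 ≤ M lamS := by
    have hconv : Tendsto (fun n : ℕ => M (lamS + 1 / ((n:ℝ) + 1))) atTop (𝓝 (M lamS)) := by
      apply tendsto_integral_of_dominated_convergence (bound := G (lamS + 1))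
        (fun n => (hGmeas _).aestronglyMeasurable) (hGint _)
      · intro n
        filter_upwards with x
        rw [Real.norm_eq_abs, abs_of_nonneg (hGnonneg _ x)]
        apply hGmono
        have h1 : 1/((n:ℝ)+1) ≤ 1 := by
          rw [div_le_one (by positivity)]
          simp
        linarith
      · filter_upwards with x
        rcases le_or_gt (V x) (lamS + α) with h | h
        · have heq : ∀ n : ℕ, G (lamS + 1/((n:ℝ)+1)) x
              = phiP Iw ((lamS + 1/((n:ℝ)+1)) + α - V x) := by
            intro n
            simp only [hGdef]
            rw [if_pos]
            have : (0:ℝ) < 1/((n:ℝ)+1) := by positivity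
            linarith
          have hlim : Tendsto (fun n : ℕ => phiP Iw ((lamS + 1/((n:ℝ)+1)) + α - V x))
              atTop (𝓝 (phiP Iw (lamS + α - V x))) := by
            apply ((phiP_continuous Iw).tendsto _).comp
            have h2 : Tendsto (fun n : ℕ => (lamS + 1/((n:ℝ)+1)) + α - V x) atTop
                (𝓝 (lamS + 0 + α - V x)) := by
              exact (((tendsto_const_nhds.add hseq0).add_const α).sub_const (V x))
            simpa using h2
          have hGx : G lamS x = phiP Iw (lamS + α - V x) := by
            simp only [hGdef]; rw [if_pos h]
          rw [hGx]
          exact Tendsto.congr (fun n => (heq n).symm) hlim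
        · have hGx : G lamS x = 0 := by
            simp only [hGdef]; rw [if_neg (by linarith)]
          rw [hGx]
          have hev : ∀ᶠ n : ℕ in atTop, G (lamS + 1/((n:ℝ)+1)) x = 0 := by
            have : ∀ᶠ n : ℕ in atTop, 1/((n:ℝ)+1) < V x - lamS - α :=
              hseq0.eventually (eventually_lt_nhds (by linarith))
            filter_upwards [this] with n hn
            simp only [hGdef]
            rw [if_neg (by linarith)]
          exact Tendsto.congr' (hev.mono fun n hn => hn.symm) tendsto_const_nhds
    apply ge_of_tendsto hconv
    filter_upwards with n
    have hpos : (0:ℝ) < 1/((n:ℝ)+1) := by positivity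
    have : lamS < lamS + 1/((n:ℝ)+1) := by linarith
    obtain ⟨a, haS, ha⟩ := exists_lt_of_csInf_lt hSnonempty this
    exact le_trans haS (hMmono _ _ ha.le)
  -- the strict sublevel version Gm and its mass Mm
  set Gm : ℝ → ℝ := fun x => if V x < lamS + α then phiP Iw (lamS + α - V x) else 0
    with hGmdef
  have hGmmeas : Measurable Gm := by
    apply Measurable.ite (measurableSet_lt hVmeas measurable_const)
    · exact (phiP_continuous Iw).measurable.comp (measurable_const.sub hVmeas)
    · exact measurable_const
  have hGmnonneg : ∀ x, 0 ≤ Gm x := by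
    intro x
    simp only [hGmdef]
    split_ifs
    · exact phiP_nonneg hIw _
    · exact le_refl 0
  have hGmle : ∀ x, Gm x ≤ G lamS x := by
    intro x
    simp only [hGmdef, hGdef]
    split_ifs with h1 h2
    · exact le_refl _
    · exact absurd h1.le h2
    · exact phiP_nonneg hIw _
    · exact le_refl 0
  have hGmint : Integrable Gm := by
    apply Integrable.mono' (hGint lamS) hGmmeas.aestronglyMeasurable
    filter_upwards with x
    rw [Real.norm_eq_abs, abs_of_nonneg (hGmnonneg x)]
    exact hGmle x
  set Mm : ℝ := ∫ x, Gm x with hMmdef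
  have hdown : Mm ≤ 1 := by
    have hconv : Tendsto (fun n : ℕ => M (lamS - 1 / ((n:ℝ) + 1))) atTop (𝓝 Mm) := by
      apply tendsto_integral_of_dominated_convergence (bound := G lamS)
        (fun n => (hGmeas _).aestronglyMeasurable) (hGint _)
      · intro n
        filter_upwards with x
        rw [Real.norm_eq_abs, abs_of_nonneg (hGnonneg _ x)]
        apply hGmono
        have : (0:ℝ) < 1/((n:ℝ)+1) := by positivity
        linarith
      · filter_upwards with x
        rcases lt_or_ge (V x) (lamS + α) with h | h
        · have hev : ∀ᶠ n : ℕ in atTop, G (lamS - 1/((n:ℝ)+1)) x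
              = phiP Iw ((lamS - 1/((n:ℝ)+1)) + α - V x) := by
            have : ∀ᶠ n : ℕ in atTop, 1/((n:ℝ)+1) < lamS + α - V x :=
              hseq0.eventually (eventually_lt_nhds (by linarith))
            filter_upwards [this] with n hn
            simp only [hGdef]
            rw [if_pos (by linarith)]
          have hlim : Tendsto (fun n : ℕ => phiP Iw ((lamS - 1/((n:ℝ)+1)) + α - V x))
              atTop (𝓝 (phiP Iw (lamS + α - V x))) := by
            apply ((phiP_continuous Iw).tendsto _).comp
            have h2 : Tendsto (fun n : ℕ => (lamS - 1/((n:ℝ)+1)) + α - V x) atTop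
                (𝓝 (lamS - 0 + α - V x)) :=
              ((tendsto_const_nhds.sub hseq0).add_const α).sub_const (V x)
            simpa using h2
          have hGmx : Gm x = phiP Iw (lamS + α - V x) := by
            simp only [hGmdef]; rw [if_pos h]
          rw [hGmx]
          exact Tendsto.congr' (hev.mono fun n hn => hn.symm) hlim
        · have hGmx : Gm x = 0 := by
            simp only [hGmdef]; rw [if_neg (not_lt.mpr h)]
          rw [hGmx]
          have heq : ∀ n : ℕ, G (lamS - 1/((n:ℝ)+1)) x = 0 := by
            intro n
            simp only [hGdef]
            rw [if_neg]
            have : (0:ℝ) < 1/((n:ℝ)+1) := by positivity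
            intro hcon
            linarith
          exact Tendsto.congr (fun n => (heq n).symm) tendsto_const_nhds
    apply le_of_tendsto hconv
    filter_upwards with n
    have hpos : (0:ℝ) < 1/((n:ℝ)+1) := by positivity
    have hlt : lamS - 1/((n:ℝ)+1) < lamS := by linarith
    have hnot : lamS - 1/((n:ℝ)+1) ∉ S := fun hmem => absurd (csInf_le hbddS hmem) (not_le.mpr hlt)
    have : ¬ (1 ≤ M (lamS - 1/((n:ℝ)+1))) := hnot
    linarith [not_le.mp this]
  -- the level set A
  set A : Set ℝ := {x | V x = lamS + α} with hAdef
  have hAmeas : MeasurableSet A := hVmeas (measurableSet_singleton (lamS + α))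
  obtain ⟨R0, hR0pos, hR0⟩ := hcomp (lamS + α + 1)
  have hAsub : A ⊆ Set.Icc (-R0) R0 := by
    intro x hx
    by_contra hcon
    have habs : R0 < |x| := by
      rcases lt_or_ge R0 (|x|) with h | h
      · exact h
      · exact absurd ⟨by linarith [neg_abs_le x], by linarith [le_abs_self x]⟩ hcon
    have := hR0 x habs
    have hxA : V x = lamS + α := hx
    linarith
  have hAfin : volume A < ⊤ := lt_of_le_of_lt (measure_mono hAsub) measure_Icc_lt_top
  set v : ℝ := (volume A).toReal with hvdef
  have hv0 : 0 ≤ v := ENNReal.toReal_nonneg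
  -- difference identity
  have hdiffval : (fun x => G lamS x - Gm x) = A.indicator (fun _ => rhoAlphaC Iw) := by
    funext x
    rcases lt_trichotomy (V x) (lamS + α) with h | h | h
    · have hx : x ∉ A := by simp [hAdef]; linarith
      rw [Set.indicator_of_notMem hx]
      simp only [hGdef, hGmdef]
      rw [if_pos h.le, if_pos h]
      ring
    · have hx : x ∈ A := h
      rw [Set.indicator_of_mem hx]
      simp only [hGdef, hGmdef]
      rw [if_pos h.le, if_neg (by rw [h]; exact lt_irrefl _), h]
      simp [phiP_zero hIw]
    · have hx : x ∉ A := by simp [hAdef]; linarith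
      rw [Set.indicator_of_notMem hx]
      simp only [hGdef, hGmdef]
      rw [if_neg (by linarith), if_neg (by linarith)]
      ring
  have hdiff : M lamS - Mm = rhoAlphaC Iw * v := by
    have h1 : M lamS - Mm = ∫ x, (G lamS x - Gm x) :=
      (integral_sub (hGint lamS) hGmint).symm
    rw [h1, hdiffval, integral_indicator_const _ hAmeas, measureReal_def, smul_eq_mul, hvdef, mul_comm]
  -- the weight θ on the level set
  set θ : ℝ := if v = 0 then 0 else (1 - Mm) / (rhoAlphaC Iw * v) with hθdef
  have hθ0 : 0 ≤ θ := by
    simp only [hθdef]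
    split_ifs with h
    · exact le_refl 0
    · apply div_nonneg (by linarith) (by positivity)
  have hθρ : θ * rhoAlphaC Iw ≤ rhoAlphaC Iw := by
    simp only [hθdef]
    split_ifs with h
    · simpa using hρ.le
    · have hvpos : 0 < v := lt_of_le_of_ne hv0 (Ne.symm h)
      have h1 : (1 - Mm) / (rhoAlphaC Iw * v) ≤ 1 := by
        rw [div_le_one (by positivity)]
        linarith [hdiff, hup]
      nlinarith
  -- the candidate minimizer
  set ρ₀ : ℝ → ℝ := fun x => Gm x + A.indicator (fun _ => θ * rhoAlphaC Iw) x with hρ₀def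
  have hindmeas : Measurable (A.indicator (fun _ => θ * rhoAlphaC Iw)) :=
    (measurable_const.indicator hAmeas)
  have hρ₀meas : Measurable ρ₀ := hGmmeas.add hindmeas
  have hindnonneg : ∀ x, 0 ≤ A.indicator (fun _ => θ * rhoAlphaC Iw) x := fun x =>
    Set.indicator_nonneg (fun _ _ => mul_nonneg hθ0 hρ.le) x
  have hρ₀nonneg : ∀ x, 0 ≤ ρ₀ x := fun x => add_nonneg (hGmnonneg x) (hindnonneg x)
  have hval1 : ∀ x, V x < lamS + α → ρ₀ x = phiP Iw (lamS + α - V x) := by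
    intro x h
    have hx : x ∉ A := by simp [hAdef]; linarith
    simp only [hρ₀def, hGmdef]
    rw [Set.indicator_of_notMem hx, if_pos h, add_zero]
  have hval2 : ∀ x, V x = lamS + α → ρ₀ x = θ * rhoAlphaC Iw := by
    intro x h
    have hx : x ∈ A := h
    simp only [hρ₀def, hGmdef]
    rw [Set.indicator_of_mem hx, if_neg (by rw [h]; exact lt_irrefl _), zero_add]
  have hval3 : ∀ x, lamS + α < V x → ρ₀ x = 0 := by
    intro x h
    have hx : x ∉ A := by simp [hAdef]; linarith
    simp only [hρ₀def, hGmdef]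
    rw [Set.indicator_of_notMem hx, if_neg (by linarith), add_zero]
  set Cb : ℝ := max (phiP Iw (lamS + α)) (rhoAlphaC Iw) with hCbdef
  have hCb0 : 0 ≤ Cb := le_trans hρ.le (le_max_right _ _)
  have hbnd : ∀ x, ρ₀ x ≤ Cb := by
    intro x
    rcases lt_trichotomy (V x) (lamS + α) with h | h | h
    · rw [hval1 x h]
      exact le_trans (phiP_mono Iw (by linarith [hV0 x])) (le_max_left _ _)
    · rw [hval2 x h]
      exact le_trans hθρ (le_max_right _ _)
    · rw [hval3 x h]; exact hCb0
  have hsupp : ∀ x, R0 < |x| → ρ₀ x = 0 := by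
    intro x hx
    exact hval3 x (by linarith [hR0 x hx])
  have hρ₀int : Integrable ρ₀ := by
    apply integrable_of_bound_support hρ₀meas.aestronglyMeasurable (C := Cb) (R := R0)
    · intro x _
      rw [abs_of_nonneg (hρ₀nonneg x)]
      exact hbnd x
    · exact hsupp
  -- total mass one
  have hindint : Integrable (A.indicator (fun _ => θ * rhoAlphaC Iw)) := by
    rw [integrable_indicator_iff hAmeas]
    exact integrableOn_const hAfin.ne
  have hmass : ∫ x, ρ₀ x = 1 := by
    have h1 : ∫ x, ρ₀ x = Mm + θ * rhoAlphaC Iw * v := by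
      simp only [hρ₀def]
      rw [integral_add hGmint hindint, integral_indicator_const _ hAmeas, measureReal_def, smul_eq_mul]
      ring
    rw [h1]
    simp only [hθdef]
    split_ifs with h
    · rw [h] at hdiff ⊢
      have : Mm = M lamS := by linarith
      have h2 : 1 ≤ Mm := by rw [this]; exact hup
      linarith [hdown]
    · have hvpos : 0 < v := lt_of_le_of_ne hv0 (Ne.symm h)
      field_simp
      ring
  -- integrability of J ∘ ρ₀ and V·ρ₀
  have hJint : Integrable (fun x => Jfun Iw (ρ₀ x)) := by
    apply integrable_of_bound_support ((Jfun_measurable Iw).comp hρ₀meas).aestronglyMeasurable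
      (C := Real.pi ^ 2 * Cb ^ 3 + alphaC Iw * Cb) (R := R0)
    · intro x _
      exact Jfun_bound hIw (hρ₀nonneg x) (hbnd x)
    · intro x hx
      show Jfun Iw (ρ₀ x) = 0
      rw [hsupp x hx]
      exact Jfun_eq_zero hρ.le
  obtain ⟨M₁, hM₁⟩ := hVloc R0
  have hVρint : Integrable (fun x => V x * ρ₀ x) := by
    apply integrable_of_bound_support (hVmeas.mul hρ₀meas).aestronglyMeasurable
      (C := max M₁ 0 * Cb) (R := R0)
    · intro x hx
      show |V x * ρ₀ x| ≤ _
      rw [abs_of_nonneg (mul_nonneg (hV0 x) (hρ₀nonneg x))]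
      apply mul_le_mul (le_trans (hM₁ x hx) (le_max_left _ _)) (hbnd x) (hρ₀nonneg x)
        (le_max_right _ _)
    · intro x hx
      show V x * ρ₀ x = 0
      rw [hsupp x hx, mul_zero]
  have hadm : TFJadm Iw V ρ₀ := ⟨hρ₀meas, hρ₀nonneg, hρ₀int, hmass, hJint, hVρint⟩
  -- MemLp for exponent 3
  have hmem : MemLp ρ₀ (ENNReal.ofReal 3) := by
    have heq : ρ₀ = (Set.Icc (-R0) R0).indicator ρ₀ := by
      funext x
      by_cases hx : x ∈ Set.Icc (-R0) R0
      · rw [Set.indicator_of_mem hx]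
      · rw [Set.indicator_of_notMem hx]
        apply hsupp
        rcases le_or_gt (|x|) R0 with h | h
        · exact absurd ⟨by linarith [neg_abs_le x], by linarith [le_abs_self x]⟩ hx
        · exact h
    rw [heq, memLp_indicator_iff_restrict measurableSet_Icc]
    apply MemLp.of_bound hρ₀meas.aestronglyMeasurable.restrict Cb
    filter_upwards with x
    rw [Real.norm_eq_abs, abs_of_nonneg (hρ₀nonneg x)]
    exact hbnd x
  refine ⟨lamS, ρ₀, hadm, hmem, ?_⟩
  intro x s hs
  rcases lt_trichotomy (V x) (lamS + α) with h | h | h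
  · rw [hval1 x h]
    exact min_phiP hIw (by linarith) hs
  · rw [hval2 x h]
    exact min_flat hIw (Or.inr ⟨by linarith, mul_nonneg hθ0 hρ.le, hθρ⟩) hs
  · rw [hval3 x h]
    exact min_flat hIw (Or.inl ⟨by linarith, rfl⟩) hs

end TFaux

/-- **Proposition (Minimization problem for the relaxed energy).** The relaxed
problem admits a minimizer `ρ ∈ L³`, and every minimizer satisfies the
Euler–Lagrange conditions:
`e_α′(ρ)·1_{ρ ≥ ρ_α} + V − α = λ` a.e. on `supp ρ` and `V − α ≥ λ` a.e. outside. -/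
theorem relaxed_thomasFermi_minimizer_exists
    (Iw : ℝ) (hIw : 0 < Iw)
    (V : ℝ → ℝ) (hVmeas : Measurable V) (hV0 : ∀ x, 0 ≤ V x)
    (hVloc : ∀ R : ℝ, ∃ M, ∀ x : ℝ, |x| ≤ R → V x ≤ M)
    (hVinf : Tendsto V (Filter.cocompact ℝ) atTop) :
    (∃ ρ, TFJadm Iw V ρ ∧ MemLp ρ (ENNReal.ofReal 3) ∧
      EJfun Iw V ρ = ETFJ Iw V) ∧
    (∀ ρ, TFJadm Iw V ρ → EJfun Iw V ρ = ETFJ Iw V →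
      ∃ lam : ℝ,
        (∀ᵐ x : ℝ, ρ x ≠ 0 →
          eAlphaDeriv Iw (ρ x) * (if rhoAlphaC Iw ≤ ρ x then 1 else 0)
            + V x - alphaC Iw = lam) ∧
        (∀ᵐ x : ℝ, ρ x = 0 → lam ≤ V x - alphaC Iw)) := by
  obtain ⟨lam, ρ₀, hadm₀, hmem₀, hmin₀⟩ := TFaux.exists_good Iw hIw V hVmeas hV0 hVloc hVinf
  have hsplit : ∀ ρ, TFJadm Iw V ρ →
      Integrable (fun x => Jfun Iw (ρ x) - (lam + alphaC Iw - V x) * ρ x) ∧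
      (∫ x, (Jfun Iw (ρ x) - (lam + alphaC Iw - V x) * ρ x)) = EJfun Iw V ρ - lam := by
    rintro ρ ⟨hm, h0, hint, hone, hJ, hV⟩
    have heq : (fun x => Jfun Iw (ρ x) - (lam + alphaC Iw - V x) * ρ x)
        = fun x => (Jfun Iw (ρ x) + V x * ρ x) - (lam + alphaC Iw) * ρ x := by
      funext x; ring
    have hsum : Integrable (fun x => Jfun Iw (ρ x) + V x * ρ x) := hJ.add hV
    have hcm : Integrable (fun x => (lam + alphaC Iw) * ρ x) := hint.const_mul _
    constructor
    · rw [heq]; exact hsum.sub hcm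
    · rw [heq, integral_sub hsum hcm, integral_add hJ hV,
        integral_const_mul, hone]
      unfold EJfun
      rw [hone]
      ring
  have hle : ∀ ρ, TFJadm Iw V ρ → EJfun Iw V ρ₀ ≤ EJfun Iw V ρ := by
    intro ρ hadm
    obtain ⟨hi₀, he₀⟩ := hsplit ρ₀ hadm₀
    obtain ⟨hi, he⟩ := hsplit ρ hadm
    have h := integral_mono hi₀ hi (fun x => hmin₀ x (ρ x) (hadm.2.1 x))
    rw [he₀, he] at h
    linarith
  have hmemS : EJfun Iw V ρ₀ ∈ {e | ∃ ρ, TFJadm Iw V ρ ∧ e = EJfun Iw V ρ} := ⟨ρ₀, hadm₀, rfl⟩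
  have hlb : ∀ e ∈ {e | ∃ ρ, TFJadm Iw V ρ ∧ e = EJfun Iw V ρ}, EJfun Iw V ρ₀ ≤ e := by
    rintro e ⟨ρ, hadm, rfl⟩
    exact hle ρ hadm
  have hETFJ : EJfun Iw V ρ₀ = ETFJ Iw V := by
    unfold ETFJ
    exact le_antisymm (le_csInf ⟨_, hmemS⟩ hlb) (csInf_le ⟨_, hlb⟩ hmemS)
  refine ⟨⟨ρ₀, hadm₀, hmem₀, hETFJ⟩, ?_⟩
  intro ρ hadm hE
  obtain ⟨hi₀, he₀⟩ := hsplit ρ₀ hadm₀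
  obtain ⟨hi, he⟩ := hsplit ρ hadm
  set D : ℝ → ℝ := fun x => (Jfun Iw (ρ x) - (lam + alphaC Iw - V x) * ρ x)
      - (Jfun Iw (ρ₀ x) - (lam + alphaC Iw - V x) * ρ₀ x) with hDdef
  have hDnonneg : ∀ x, 0 ≤ D x := fun x => sub_nonneg.mpr (hmin₀ x (ρ x) (hadm.2.1 x))
  have hDint : Integrable D := hi.sub hi₀
  have hDzero : ∫ x, D x = 0 := by
    simp only [hDdef]
    rw [integral_sub hi hi₀, he, he₀, hE, hETFJ]
    ring
  have hae : ∀ᵐ x, D x = 0 := by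
    have h := (integral_eq_zero_iff_of_nonneg (fun x => hDnonneg x) hDint).mp hDzero
    filter_upwards [h] with x hx
    exact hx
  have haemin : ∀ᵐ x, ∀ s, 0 ≤ s →
      Jfun Iw (ρ x) - (lam + alphaC Iw - V x) * ρ x
        ≤ Jfun Iw s - (lam + alphaC Iw - V x) * s := by
    filter_upwards [hae] with x hx s hs
    have h1 := hmin₀ x s hs
    have h2 : Jfun Iw (ρ x) - (lam + alphaC Iw - V x) * ρ x
        = Jfun Iw (ρ₀ x) - (lam + alphaC Iw - V x) * ρ₀ x := by
      simp only [hDdef] at hx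
      linarith
    linarith
  refine ⟨lam, ?_, ?_⟩
  · filter_upwards [haemin] with x hx hne
    obtain ⟨h1, _⟩ := TFaux.EL_of_min hIw (hadm.2.1 x) hx
    have h2 := h1 hne
    linarith
  · filter_upwards [haemin] with x hx h0
    obtain ⟨_, h1⟩ := TFaux.EL_of_min hIw (hadm.2.1 x) hx
    have h2 := h1 h0
    linarith

end
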